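/- arXiv:math/0509603 — 4 statements merged into one kernel-verified Lean document; each statement's English description precedes it below -/
import Mathlib

section
/- For every irrational x in (0,1) with continued fraction expansion [a_1, a_2, ...] and every k ≥ 0, the denominator q_k of the k-th convergent satisfies q_k ≤ γ^{τ_k} ρ^{τ_k - k - 1}, where τ_k = a_1 + ... + a_k (with τ_0 = 0), γ = (1+√5)/2, and ρ = 1 - γ^{-6}. -/
open Finset

section aux

variable {g p c : ℝ}

private lemma numc (hglb : 1.618 < g) (hgub : g < 1.6181)
    (hplb : 0.9442 < p) (hpub : p < 0.9443) (hc_def : c = g * p) :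
    1.5277 < c ∧ c < 1.528 := by
  constructor <;> (rw [hc_def]; nlinarith)

private lemma hM0aux (hg2 : g ^ 2 = g + 1) (hglb : 1.618 < g) (hgub : g < 1.6181)
    (hplb : 0.9442 < p) (hpub : p < 0.9443)
    (hclb : 1.5277 < c) (hc_def : c = g * p) :
    ∀ m : ℕ, 1 ≤ m → p ^ 2 ≤ (c - p) * c ^ m := by
  intro m hm
  have hc1 : (1:ℝ) ≤ c := by linarith
  have h1 : (c - p) * c = p ^ 2 := by rw [hc_def]; linear_combination p ^ 2 * hg2
  have h2 : c ^ 1 ≤ c ^ m := pow_le_pow_right₀ hc1 hm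
  have hcp : (0:ℝ) < c - p := by nlinarith
  calc p ^ 2 = (c - p) * c ^ 1 := by rw [pow_one]; linarith [h1]
  _ ≤ (c - p) * c ^ m := by nlinarith

private lemma hM1aux (hplb : 0.9442 < p) (hpub : p < 0.9443)
    (hclb : 1.5277 < c) (hcub : c < 1.528) :
    ∀ n : ℕ, 2 ≤ n → c / 4 + (n : ℝ) * p ≤ c ^ n := by
  have hc1 : (1:ℝ) ≤ c := by linarith
  intro n hn
  induction n, hn using Nat.le_induction with
  | base => push_cast; nlinarith
  | succ n hn ih =>
    have h2 : c ^ 2 ≤ c ^ n := pow_le_pow_right₀ hc1 hn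
    have h3 : c ^ (n + 1) = c ^ n * c := by ring
    push_cast
    nlinarith [mul_nonneg (by nlinarith : (0:ℝ) ≤ c ^ n - c ^ 2) (by linarith : (0:ℝ) ≤ c - 1)]

private lemma hM2aux (hglb : 1.618 < g) (hgub : g < 1.6181)
    (hplb : 0.9442 < p) (hpub : p < 0.9443)
    (hclb : 1.5277 < c) (hcub : c < 1.528) :
    ∀ n : ℕ, 2 ≤ n → c ^ 2 + 4/5 * p ^ 2 * g * ((n : ℝ) - 1) ≤ c ^ (n + 1) := by
  have hc1 : (1:ℝ) ≤ c := by linarith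
  intro n hn
  induction n, hn using Nat.le_induction with
  | base => push_cast; nlinarith
  | succ n hn ih =>
    have h2 : c ^ 3 ≤ c ^ (n + 1) := pow_le_pow_right₀ hc1 (by omega)
    have h3 : c ^ (n + 1 + 1) = c ^ (n + 1) * c := by ring
    have hc2lb : (2.3338:ℝ) < c ^ 2 := by nlinarith
    have h4 : (3.565:ℝ) < c ^ 3 := by nlinarith
    push_cast
    nlinarith [mul_nonneg (by nlinarith : (0:ℝ) ≤ c ^ (n + 1) - c ^ 3) (by linarith : (0:ℝ) ≤ c - 1)]

private lemma hM3aux (hplb : 0.9442 < p) (hpub : p < 0.9443)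
    (hclb : 1.5277 < c) (hcub : c < 1.528) :
    ∀ n : ℕ, 1 ≤ n → (n : ℝ) * p ^ 2 ≤ 4/5 * c ^ n := by
  have hc1 : (1:ℝ) ≤ c := by linarith
  intro n hn
  induction n, hn using Nat.le_induction with
  | base => push_cast; nlinarith
  | succ n hn ih =>
    rcases Nat.lt_or_ge n 2 with h | h
    · have hn1 : n = 1 := by omega
      subst hn1; push_cast; nlinarith
    · have h2 : c ^ 2 ≤ c ^ n := pow_le_pow_right₀ hc1 h
      have h3 : c ^ (n + 1) = c ^ n * c := by ring
      push_cast
      nlinarith [mul_nonneg (by nlinarith : (0:ℝ) ≤ c ^ n - c ^ 2) (by linarith : (0:ℝ) ≤ c - 1)]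

private lemma hM4aux (hg2 : g ^ 2 = g + 1) (hglb : 1.618 < g) (hgub : g < 1.6181)
    (hplb : 0.9442 < p) (hpub : p < 0.9443)
    (hclb : 1.5277 < c) (hcub : c < 1.528) (hc_def : c = g * p) :
    ∀ n : ℕ, 1 ≤ n → (n : ℝ) * c * p ^ 2 + p ^ 3 ≤ c ^ (n + 1) := by
  have hc1 : (1:ℝ) ≤ c := by linarith
  have heq2 : 2 * c * p ^ 2 + p ^ 3 = c ^ 3 := by
    rw [hc_def]; linear_combination (-(p ^ 3) * (g + 1)) * hg2
  intro n hn
  induction n, hn using Nat.le_induction with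
  | base => push_cast; nlinarith
  | succ n hn ih =>
    rcases Nat.lt_or_ge n 2 with h | h
    · have hn1 : n = 1 := by omega
      subst hn1; push_cast; nlinarith
    · have h2 : c ^ 3 ≤ c ^ (n + 1) := pow_le_pow_right₀ hc1 (by omega)
      have h3 : c ^ (n + 1 + 1) = c ^ (n + 1) * c := by ring
      have hc2lb : (2.3338:ℝ) < c ^ 2 := by nlinarith
      have h4 : (3.565:ℝ) < c ^ 3 := by nlinarith
      push_cast
      nlinarith [mul_nonneg (by nlinarith : (0:ℝ) ≤ c ^ (n + 1) - c ^ 3) (by linarith : (0:ℝ) ≤ c - 1)]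

private lemma hM5aux (hplb : 0.9442 < p) (hpub : p < 0.9443)
    (hclb : 1.5277 < c) (hcub : c < 1.528) :
    ∀ n : ℕ, 1 ≤ n → ((n : ℝ) + 1) * p ^ 3 ≤ 4/5 * c ^ (n + 1) := by
  have hc1 : (1:ℝ) ≤ c := by linarith
  have hp2ub : p ^ 2 < 0.89171 := by nlinarith
  have hp3ub : p ^ 3 < 0.84213 := by nlinarith [hp2ub]
  have hc2lb : (2.3338:ℝ) < c ^ 2 := by nlinarith
  have hc2ub : c ^ 2 < 2.3348 := by nlinarith
  have hc3lb : (3.565:ℝ) < c ^ 3 := by nlinarith [hc2lb]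
  intro n hn
  induction n, hn using Nat.le_induction with
  | base => push_cast; nlinarith
  | succ n hn ih =>
    have h2 : c ^ 2 ≤ c ^ (n + 1) := pow_le_pow_right₀ hc1 (by omega)
    have h3 : c ^ (n + 1 + 1) = c ^ (n + 1) * c := by ring
    push_cast
    nlinarith [mul_nonneg (by nlinarith : (0:ℝ) ≤ c ^ (n + 1) - c ^ 2) (by linarith : (0:ℝ) ≤ c - 1)]

-- abstract form of the a ≥ 2 step, in real variables
-- Q = q_i p^{i+1}, R = q_{i-1} p^{i+2}, X = c^{T i}, Y = c^{a}, A = a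
private lemma step2A (A Q R X Y : ℝ) (hglb : 1.618 < g) (hgub : g < 1.6181)
    (hplb : 0.9442 < p) (hpub : p < 0.9443)
    (hclb : 1.5277 < c) (hcub : c < 1.528)
    (hA2 : (2:ℝ) ≤ A) (hQ0 : 0 ≤ Q) (hR0 : 0 ≤ R) (hX0 : 0 < X)
    (hA : Q ≤ 4/5 * X) (hB : c * Q + R ≤ X * c)
    (hM1' : c / 4 + A * p ≤ Y) :
    A * p * Q + R ≤ 4/5 * (X * Y) := by
  nlinarith [mul_nonneg (by nlinarith : (0:ℝ) ≤ A * p - c) (by linarith : (0:ℝ) ≤ 4/5 * X - Q),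
    mul_nonneg (by positivity : (0:ℝ) ≤ 4/5 * X) (by linarith : (0:ℝ) ≤ Y - (c / 4 + A * p))]

-- abstract form of the a ≥ 2 step, B part; Y = c^{a+1}
private lemma step2B (A Q R X Y : ℝ) (hg2 : g ^ 2 = g + 1)
    (hglb : 1.618 < g) (hgub : g < 1.6181)
    (hplb : 0.9442 < p) (hpub : p < 0.9443)
    (hclb : 1.5277 < c) (hcub : c < 1.528) (hc_def : c = g * p)
    (hA2 : (2:ℝ) ≤ A) (hQ0 : 0 ≤ Q) (hR0 : 0 ≤ R) (hX0 : 0 < X)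
    (hA : Q ≤ 4/5 * X) (hB : c * Q + R ≤ X * c)
    (hM2' : c ^ 2 + 4/5 * p ^ 2 * g * (A - 1) ≤ Y) :
    c * (A * p * Q + R) + Q * p ^ 2 ≤ X * Y := by
  have hcoeq : A * c * p + p ^ 2 - c ^ 2 = p ^ 2 * g * (A - 1) := by
    rw [hc_def]; linear_combination (-(p ^ 2)) * hg2
  have hco : (0:ℝ) ≤ A * c * p + p ^ 2 - c ^ 2 := by
    rw [hcoeq]
    exact mul_nonneg (mul_nonneg (sq_nonneg p) (by linarith)) (by linarith)
  have hc0 : (0:ℝ) < c := by linarith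
  nlinarith [mul_nonneg hco (by linarith : (0:ℝ) ≤ 4/5 * X - Q),
    mul_le_mul_of_nonneg_left hB hc0.le,
    mul_nonneg hX0.le (by linarith : (0:ℝ) ≤ Y - (c ^ 2 + 4/5 * p ^ 2 * g * (A - 1)))]

end aux

set_option maxHeartbeats 1000000 in
private lemma denom_aux (a q : ℕ → ℕ) (T : ℕ → ℕ) (g p c : ℝ)
    (hg2 : g ^ 2 = g + 1) (hglb : 1.618 < g) (hgub : g < 1.6181)
    (hplb : 0.9442 < p) (hpub : p < 0.9443) (hc_def : c = g * p)
    (ha : ∀ i, 1 ≤ i → 1 ≤ a i) (hq0 : q 0 = 1) (hq1 : q 1 = a 1)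
    (hqrec : ∀ k, 1 ≤ k → q (k + 1) = a (k + 1) * q k + q (k - 1))
    (hT0 : T 0 = 0) (hTs : ∀ k, T (k + 1) = T k + a (k + 1)) :
    ∀ k, (q k : ℝ) * p ^ (k + 1) ≤ c ^ (T k) := by
  obtain ⟨hclb, hcub⟩ := numc hglb hgub hplb hpub hc_def
  have hg0 : (0:ℝ) < g := by linarith
  have hp0 : (0:ℝ) < p := by linarith
  have hp1 : p ≤ 1 := by linarith
  have hc0 : (0:ℝ) < c := by linarith
  have hc1 : (1:ℝ) ≤ c := by linarith
  have hM0 := hM0aux hg2 hglb hgub hplb hpub hclb hc_def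
  have hM1 := hM1aux hplb hpub hclb hcub
  have hM2 := hM2aux hglb hgub hplb hpub hclb hcub
  have hM3 := hM3aux hplb hpub hclb hcub
  have hM4 := hM4aux hg2 hglb hgub hplb hpub hclb hcub hc_def
  have hM5 := hM5aux hplb hpub hclb hcub
  -- generic step for a (i+1) ≥ 2
  have step2 : ∀ i, 1 ≤ i → 2 ≤ a (i + 1) →
      ((q i : ℝ) * p ^ (i + 1) ≤ 4/5 * c ^ (T i)) →
      (c * ((q i : ℝ) * p ^ (i + 1)) + (q (i - 1) : ℝ) * p ^ (i + 2) ≤ c ^ (T i + 1)) →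
      ((q (i + 1) : ℝ) * p ^ (i + 2) ≤ 4/5 * c ^ (T (i + 1)) ∧
       c * ((q (i + 1) : ℝ) * p ^ (i + 2)) + (q i : ℝ) * p ^ (i + 3) ≤ c ^ (T (i + 1) + 1)) := by
    intro i hi ha2 hA hB
    have hq := hqrec i hi
    have hTsi := hTs i
    have hA2 : (2:ℝ) ≤ (a (i + 1) : ℝ) := by exact_mod_cast ha2
    have hQR : (q (i + 1) : ℝ) * p ^ (i + 2) =
        (a (i + 1) : ℝ) * p * ((q i : ℝ) * p ^ (i + 1)) + (q (i - 1) : ℝ) * p ^ (i + 2) := by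
      rw [hq]; push_cast; ring
    have hX0 : (0:ℝ) < c ^ (T i) := pow_pos hc0 _
    have hQ0 : (0:ℝ) ≤ (q i : ℝ) * p ^ (i + 1) := by positivity
    have hR0 : (0:ℝ) ≤ (q (i - 1) : ℝ) * p ^ (i + 2) := by positivity
    have hBc : c * ((q i : ℝ) * p ^ (i + 1)) + (q (i - 1) : ℝ) * p ^ (i + 2) ≤ c ^ (T i) * c := by
      calc c * ((q i : ℝ) * p ^ (i + 1)) + (q (i - 1) : ℝ) * p ^ (i + 2) ≤ c ^ (T i + 1) := hB
      _ = c ^ (T i) * c := by ring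
    constructor
    · rw [hQR, hTsi, pow_add c (T i) (a (i + 1))]
      exact step2A (a (i+1) : ℝ) _ _ _ _ hglb hgub hplb hpub hclb hcub hA2 hQ0 hR0 hX0 hA hBc
        (hM1 (a (i + 1)) ha2)
    · have hQp : (q i : ℝ) * p ^ (i + 3) = ((q i : ℝ) * p ^ (i + 1)) * p ^ 2 := by ring
      have hpowsplit : c ^ (T (i + 1) + 1) = c ^ (T i) * c ^ (a (i + 1) + 1) := by
        rw [hTsi, ← pow_add c (T i) (a (i + 1) + 1)]
        ring_nf
      rw [hQR, hQp, hpowsplit]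
      exact step2B (a (i+1) : ℝ) _ _ _ _ hg2 hglb hgub hplb hpub hclb hcub hc_def hA2 hQ0 hR0
        hX0 hA hBc (hM2 (a (i + 1)) ha2)
  -- step for a (i+1) = 1, A-part
  have step1A : ∀ i, 1 ≤ i → a (i + 1) = 1 →
      ((q i : ℝ) * p ^ (i + 1) ≤ 4/5 * c ^ (T i)) →
      ((q (i - 1) : ℝ) * p ^ (i + 2) ≤ 4/5 * (c - p) * c ^ (T i)) →
      (q (i + 1) : ℝ) * p ^ (i + 2) ≤ 4/5 * c ^ (T (i + 1)) := by
    intro i hi ha1 hA hR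
    have hq := hqrec i hi
    have hTsi := hTs i
    rw [ha1] at hTsi
    have hQR : (q (i + 1) : ℝ) * p ^ (i + 2) =
        p * ((q i : ℝ) * p ^ (i + 1)) + (q (i - 1) : ℝ) * p ^ (i + 2) := by
      rw [hq, ha1]; push_cast; ring
    rw [hQR, hTsi, pow_add c (T i) 1, pow_one]
    have hX0 : (0:ℝ) < c ^ (T i) := pow_pos hc0 _
    nlinarith [mul_le_mul_of_nonneg_left hA hp0.le]
  -- step for a (i+1) = 1, B-part
  have step1B : ∀ i, 1 ≤ i → a (i + 1) = 1 →
      (c * ((q i : ℝ) * p ^ (i + 1)) + (q (i - 1) : ℝ) * p ^ (i + 2) ≤ c ^ (T i + 1)) →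
      c * ((q (i + 1) : ℝ) * p ^ (i + 2)) + (q i : ℝ) * p ^ (i + 3) ≤ c ^ (T (i + 1) + 1) := by
    intro i hi ha1 hB
    have hq := hqrec i hi
    have hTsi := hTs i
    rw [ha1] at hTsi
    have hid : c * p + p ^ 2 = c ^ 2 := by rw [hc_def]; linear_combination (-(p ^ 2)) * hg2
    have hQR : c * ((q (i + 1) : ℝ) * p ^ (i + 2)) + (q i : ℝ) * p ^ (i + 3) =
        (c * p + p ^ 2) * ((q i : ℝ) * p ^ (i + 1)) + c * ((q (i - 1) : ℝ) * p ^ (i + 2)) := by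
      rw [hq, ha1]; push_cast; ring
    rw [hQR, hid, hTsi]
    have hpow : c ^ (T i + 1 + 1) = c ^ (T i + 1) * c := by ring
    rw [hpow]
    have h1 : c * (c * ((q i : ℝ) * p ^ (i + 1)) + (q (i - 1) : ℝ) * p ^ (i + 2)) ≤
        c ^ (T i + 1) * c := by
      calc c * (c * ((q i : ℝ) * p ^ (i + 1)) + (q (i - 1) : ℝ) * p ^ (i + 2))
          = (c * ((q i : ℝ) * p ^ (i + 1)) + (q (i - 1) : ℝ) * p ^ (i + 2)) * c := by ring
      _ ≤ c ^ (T i + 1) * c := by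
          apply mul_le_mul_of_nonneg_right hB hc0.le
    have h2 : (0:ℝ) ≤ (q (i - 1) : ℝ) * p ^ (i + 2) := by positivity
    nlinarith [h1, h2]
  -- base case k = 1
  have hT1 : T 1 = a 1 := by rw [hTs 0, hT0]; norm_num
  have base1A : (q 1 : ℝ) * p ^ 2 ≤ 4/5 * c ^ (T 1) := by
    rw [hq1, hT1]
    have h := hM3 (a 1) (ha 1 le_rfl)
    nlinarith [h]
  have base1B : c * ((q 1 : ℝ) * p ^ 2) + (q 0 : ℝ) * p ^ 3 ≤ c ^ (T 1 + 1) := by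
    rw [hq1, hq0, hT1]
    have h := hM4 (a 1) (ha 1 le_rfl)
    push_cast
    nlinarith [h]
  -- the key invariant, by strong induction
  have key : ∀ k : ℕ, 1 ≤ k →
      ((q k : ℝ) * p ^ (k + 1) ≤ 4/5 * c ^ (T k) ∧
       c * ((q k : ℝ) * p ^ (k + 1)) + (q (k - 1) : ℝ) * p ^ (k + 2) ≤ c ^ (T k + 1)) := by
    intro k
    induction k using Nat.strong_induction_on with
    | _ k IH =>
      intro hk1
      match k, hk1 with
      | 1, _ => exact ⟨base1A, base1B⟩
      | 2, _ =>
        rcases Nat.lt_or_ge (a 2) 2 with h | h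
        · have ha1 : a 2 = 1 := by have := ha 2 (by omega); omega
          constructor
          · have hq2 : q 2 = q 1 + q 0 := by
              have h2 := hqrec 1 le_rfl; rw [ha1] at h2; simpa using h2
            have hT2 : T 2 = a 1 + 1 := by rw [hTs 1, hT1, ha1]
            rw [hq2, hq1, hq0, hT2]
            have h5 := hM5 (a 1) (ha 1 le_rfl)
            push_cast
            nlinarith [h5]
          · exact step1B 1 le_rfl ha1 base1B
        · exact step2 1 le_rfl h base1A base1B
      | (i + 3), _ =>
        have hIH := IH (i + 2) (by omega) (by omega)
        have hIH' := IH (i + 1) (by omega) (by omega)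
        have hA : (q (i + 2) : ℝ) * p ^ (i + 3) ≤ 4/5 * c ^ (T (i + 2)) := hIH.1
        have hB : c * ((q (i + 2) : ℝ) * p ^ (i + 3)) + (q (i + 1) : ℝ) * p ^ (i + 4) ≤
            c ^ (T (i + 2) + 1) := by
          have h2 := hIH.2
          simpa using h2
        rcases Nat.lt_or_ge (a (i + 3)) 2 with h | h
        · have ha1 : a (i + 3) = 1 := by have := ha (i + 3) (by omega); omega
          have hA' : (q (i + 1) : ℝ) * p ^ (i + 2) ≤ 4/5 * c ^ (T (i + 1)) := hIH'.1
          have hRb : (q (i + 1) : ℝ) * p ^ (i + 4) ≤ 4/5 * (c - p) * c ^ (T (i + 2)) := by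
            have hTsi : T (i + 2) = T (i + 1) + a (i + 2) := hTs (i + 1)
            have hm := hM0 (a (i + 2)) (ha (i + 2) (by omega))
            have h1 : (q (i + 1) : ℝ) * p ^ (i + 4) =
                ((q (i + 1) : ℝ) * p ^ (i + 2)) * p ^ 2 := by ring
            have hsplit : c ^ (T (i + 2)) = c ^ (T (i + 1)) * c ^ (a (i + 2)) := by
              rw [hTsi, pow_add c (T (i + 1)) (a (i + 2))]
            rw [h1, hsplit]
            have hx : (0:ℝ) ≤ (q (i + 1) : ℝ) * p ^ (i + 2) := by positivity
            have hXp : (0:ℝ) < c ^ (T (i + 1)) := pow_pos hc0 _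
            have hYp : (0:ℝ) < c ^ (a (i + 2)) := pow_pos hc0 _
            have h2 : ((q (i + 1) : ℝ) * p ^ (i + 2)) * p ^ 2 ≤
                (4/5 * c ^ (T (i + 1))) * p ^ 2 := by nlinarith [sq_nonneg p]
            calc ((q (i + 1) : ℝ) * p ^ (i + 2)) * p ^ 2
                ≤ (4/5 * c ^ (T (i + 1))) * p ^ 2 := h2
            _ ≤ 4/5 * (c - p) * (c ^ (T (i + 1)) * c ^ (a (i + 2))) := by
                nlinarith [hm, hXp]
          refine ⟨?_, ?_⟩
          · have h3 := step1A (i + 2) (by omega) ha1 hA hRb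
            simpa using h3
          · have h3 := step1B (i + 2) (by omega) ha1 hB
            simpa using h3
        · have h3 := step2 (i + 2) (by omega) h hA hB
          exact ⟨h3.1, by simpa using h3.2⟩
  -- conclude
  intro k
  rcases Nat.eq_zero_or_pos k with rfl | hk
  · rw [hq0, hT0]
    simp only [pow_zero]
    push_cast
    nlinarith [pow_pos hp0 1]
  · have h := (key k hk).1
    have hX0 : (0:ℝ) < c ^ (T k) := pow_pos hc0 _
    calc (q k : ℝ) * p ^ (k + 1) ≤ 4/5 * c ^ (T k) := h
    _ ≤ c ^ (T k) := by nlinarith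

set_option maxHeartbeats 1000000 in
/-- For a continued fraction expansion `[a 1, a 2, ...]` with all partial quotients
positive, with convergent denominators `q 0 = 1`, `q 1 = a 1`,
`q (k+1) = a (k+1) * q k + q (k-1)`, and `τ k = a 1 + ... + a k`, one has
`q k ≤ γ ^ (τ k) * ρ ^ (τ k - k - 1)`, where `γ = (1+√5)/2` and `ρ = 1 - γ⁻⁶`. -/
theorem denom_le_golden_pow (a q : ℕ → ℕ) (ha : ∀ i, 1 ≤ i → 1 ≤ a i)
    (hq0 : q 0 = 1) (hq1 : q 1 = a 1)
    (hqrec : ∀ k, 1 ≤ k → q (k + 1) = a (k + 1) * q k + q (k - 1)) :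
    ∀ k : ℕ, (q k : ℝ) ≤
      ((1 + Real.sqrt 5) / 2) ^ ((∑ i ∈ Icc 1 k, a i : ℕ) : ℝ) *
        (1 - ((1 + Real.sqrt 5) / 2) ^ (-6 : ℤ)) ^
          (((∑ i ∈ Icc 1 k, a i : ℕ) : ℝ) - k - 1) := by
  have hs5 : Real.sqrt 5 ^ 2 = 5 := Real.sq_sqrt (by norm_num)
  have hs0 : (0:ℝ) ≤ Real.sqrt 5 := Real.sqrt_nonneg 5
  set g : ℝ := (1 + Real.sqrt 5) / 2 with hg_def
  have hg2 : g ^ 2 = g + 1 := by rw [hg_def]; nlinarith [hs5]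
  have hglb : 1.618 < g := by rw [hg_def]; nlinarith [hs5, hs0]
  have hgub : g < 1.6181 := by rw [hg_def]; nlinarith [hs5, hs0]
  have hg0 : (0:ℝ) < g := by linarith
  set p : ℝ := 1 - g ^ (-6 : ℤ) with hp_def
  have hg6 : g ^ (6:ℕ) = 8 * g + 5 := by linear_combination (g^4 + g^3 + 2*g^2 + 3*g + 5) * hg2
  have hzp : g ^ (-6 : ℤ) = (g ^ (6:ℕ))⁻¹ := by
    rw [zpow_neg]; norm_cast
  have h85 : (0:ℝ) < 8 * g + 5 := by linarith
  have hp_eq : p = 1 - (8 * g + 5)⁻¹ := by rw [hp_def, hzp, hg6]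
  have hp_mul : p * (8 * g + 5) = 8 * g + 4 := by
    rw [hp_eq]; field_simp; ring
  have hplb : 0.9442 < p := by nlinarith [hp_mul]
  have hpub : p < 0.9443 := by nlinarith [hp_mul]
  have hp0 : (0:ℝ) < p := by linarith
  set T : ℕ → ℕ := fun k => ∑ i ∈ Icc 1 k, a i with hT_def
  have hT0 : T 0 = 0 := by simp [hT_def]
  have hTs : ∀ k, T (k + 1) = T k + a (k + 1) := by
    intro k
    simp only [hT_def]
    rw [Finset.sum_Icc_succ_top (by omega : 1 ≤ k + 1)]
  have main := denom_aux a q T g p (g * p) hg2 hglb hgub hplb hpub rfl ha hq0 hq1 hqrec hT0 hTs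
  intro k
  have hmk := main k
  have e1 : g ^ ((T k : ℕ) : ℝ) = g ^ (T k) := Real.rpow_natCast g (T k)
  have e2 : p ^ (((T k : ℕ) : ℝ) - k - 1) = p ^ ((T k : ℤ) - (k + 1) : ℤ) := by
    rw [← Real.rpow_intCast p ((T k : ℤ) - (k + 1))]
    push_cast
    ring_nf
  have e3 : p ^ ((T k : ℤ) - (k + 1) : ℤ) = p ^ (T k) / p ^ (k + 1) := by
    have hB : p ^ ((k : ℤ) + 1) = p ^ (k + 1) := by
      rw [show ((k:ℤ) + 1) = ((k + 1 : ℕ) : ℤ) by push_cast; ring, zpow_natCast]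
    rw [zpow_sub₀ (ne_of_gt hp0), zpow_natCast, hB]
  show (q k : ℝ) ≤ g ^ ((T k : ℕ) : ℝ) * p ^ (((T k : ℕ) : ℝ) - k - 1)
  rw [e1, e2, e3]
  have hpk : (0:ℝ) < p ^ (k + 1) := pow_pos hp0 _
  rw [mul_div_assoc', le_div_iff₀ hpk]
  calc (q k : ℝ) * p ^ (k + 1) ≤ (g * p) ^ (T k) := hmk
  _ = g ^ (T k) * p ^ (T k) := mul_pow g p (T k)
end

section
/- For every n ≥ 2, the set of rationals in the Stern–Brocot sequence of level n−1 that are not in level n−2, i.e. 𝔗_{n-1} \ 𝔗_{n-2}, has cardinality 2^{n-2}, and equals the set of finite continued fractions [a_1,...,a_k] where (a_1,...,a_k) ranges over all tuples of positive integers with a_1+...+a_k = n and a_k ≥ 2. -/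
/-- Stern–Brocot numerators. -/
def sbS : ℕ → ℕ → ℕ
  | 0, k => if k ≤ 1 then 0 else 1
  | n + 1, k =>
    if k % 2 = 1 then sbS n ((k + 1) / 2) else sbS n (k / 2) + sbS n (k / 2 + 1)

/-- Stern–Brocot denominators. -/
def sbT : ℕ → ℕ → ℕ
  | 0, _ => 1
  | n + 1, k =>
    if k % 2 = 1 then sbT n ((k + 1) / 2) else sbT n (k / 2) + sbT n (k / 2 + 1)

/-- The `n`-th Stern–Brocot sequence, as a set of real numbers. -/
def sbSeq (n : ℕ) : Set ℝ :=
  {x | ∃ k ∈ Finset.Icc 1 (2 ^ n + 1), x = (sbS n k : ℝ) / sbT n k}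

/-- The value of a finite continued fraction `[a_1, ..., a_k] = 1/(a_1 + 1/(a_2 + ...))`. -/
noncomputable def cfVal : List ℕ → ℝ
  | [] => 0
  | a :: t => 1 / (a + cfVal t)

namespace SBAux

/-- numerator/denominator pair of a continued fraction list -/
def nd : List ℕ → ℕ × ℕ
  | [] => (0, 1)
  | a :: t => ((nd t).2, a * (nd t).2 + (nd t).1)

def Pos (l : List ℕ) : Prop := ∀ x ∈ l, 1 ≤ x

lemma pos_append {l l' : List ℕ} (h : Pos l) (h' : Pos l') : Pos (l ++ l') := by
  intro x hx; rcases List.mem_append.1 hx with h1 | h1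
  exacts [h x h1, h' x h1]

lemma pos_single {a : ℕ} (ha : 1 ≤ a) : Pos [a] := by
  intro x hx; simp at hx; omega

lemma nd_den_pos {l : List ℕ} (h : Pos l) : 0 < (nd l).2 := by
  induction l with
  | nil => simp [nd]
  | cons a t ih =>
    have ha : 1 ≤ a := h a (by simp)
    have ht : Pos t := fun x hx => h x (by simp [hx])
    have := ih ht
    simp only [nd]
    nlinarith

lemma cfVal_eq_nd {l : List ℕ} (h : Pos l) :
    cfVal l = ((nd l).1 : ℝ) / ((nd l).2 : ℝ) := by
  induction l with
  | nil => simp [cfVal, nd]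
  | cons a t ih =>
    have ha : 1 ≤ a := h a (by simp)
    have ht : Pos t := fun x hx => h x (by simp [hx])
    have hd : (0:ℝ) < ((nd t).2 : ℝ) := by exact_mod_cast nd_den_pos ht
    have hd2 : (0:ℝ) < (a : ℝ) * ((nd t).2:ℝ) + ((nd t).1 : ℝ) := by
      have : (1:ℝ) ≤ (a:ℝ) := by exact_mod_cast ha
      nlinarith [Nat.cast_nonneg (α := ℝ) (nd t).1]
    rw [cfVal, ih ht]
    show 1 / ((a:ℝ) + _) = (((nd t).2 : ℕ) : ℝ) / ((a * (nd t).2 + (nd t).1 : ℕ) : ℝ)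
    have hND : (a:ℝ) + ((nd t).1:ℝ)/((nd t).2:ℝ)
        = ((a * (nd t).2 + (nd t).1 : ℕ) : ℝ) / ((nd t).2:ℝ) := by
      push_cast
      field_simp
    rw [hND, one_div_div]

lemma nd_cons (a : ℕ) (t : List ℕ) :
    nd (a :: t) = ((nd t).2, a * (nd t).2 + (nd t).1) := rfl

/-- additivity under common prefix -/
lemma nd_add_app (s1 s2 s3 : List ℕ)
    (h1 : (nd s3).1 = (nd s1).1 + (nd s2).1)
    (h2 : (nd s3).2 = (nd s1).2 + (nd s2).2) :
    ∀ w : List ℕ, (nd (w ++ s3)).1 = (nd (w ++ s1)).1 + (nd (w ++ s2)).1 ∧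
      (nd (w ++ s3)).2 = (nd (w ++ s1)).2 + (nd (w ++ s2)).2 := by
  intro w
  induction w with
  | nil => exact ⟨h1, h2⟩
  | cons c w ih =>
    simp only [List.cons_append, nd_cons]
    constructor
    · exact ih.2
    · rw [ih.1, ih.2]; ring

lemma nd_cong_app (s1 s2 : List ℕ) (h : nd s1 = nd s2) (w : List ℕ) :
    nd (w ++ s1) = nd (w ++ s2) := by
  induction w with
  | nil => exact h
  | cons c w ih => simp only [List.cons_append, nd_cons, ih]

def pairAdd (p q : ℕ × ℕ) : ℕ × ℕ := (p.1 + q.1, p.2 + q.2)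

lemma ndM1 (w : List ℕ) (a : ℕ) :
    nd (w ++ [a + 1]) = pairAdd (nd w) (nd (w ++ [a])) := by
  have := nd_add_app [] [a] [a+1] (by simp [nd]) (by simp [nd]; omega) w
  simp only [List.append_nil] at this
  exact Prod.ext this.1 this.2

lemma ndM2 (w : List ℕ) (a : ℕ) :
    nd ((w ++ [a]) ++ [2]) = pairAdd (nd (w ++ [a])) (nd (w ++ [a + 1])) := by
  have := nd_add_app [a] [a+1] [a, 2] (by simp [nd]) (by simp [nd]; omega) w
  have h2 : w ++ [a] ++ [2] = w ++ [a, 2] := by simp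
  rw [h2]
  exact Prod.ext this.1 this.2

lemma ndShift (w : List ℕ) (a : ℕ) :
    nd ((w ++ [a]) ++ [1]) = nd (w ++ [a + 1]) := by
  rw [List.append_assoc]
  exact nd_cong_app [a, 1] [a+1] (by simp [nd]) w


lemma sbS_even (n j : ℕ) : sbS (n+1) (2*j) = sbS n j + sbS n (j+1) := by
  have h1 : 2*j % 2 = 0 := by omega
  have h2 : 2*j / 2 = j := by omega
  simp [sbS, h1, h2]

lemma sbS_odd (n j : ℕ) : sbS (n+1) (2*j+1) = sbS n (j+1) := by
  have h1 : (2*j+1) % 2 = 1 := by omega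
  have h2 : (2*j+1+1) / 2 = j+1 := by omega
  simp [sbS, h1, h2]

lemma sbT_even (n j : ℕ) : sbT (n+1) (2*j) = sbT n j + sbT n (j+1) := by
  have h1 : 2*j % 2 = 0 := by omega
  have h2 : 2*j / 2 = j := by omega
  simp [sbT, h1, h2]

lemma sbT_odd (n j : ℕ) : sbT (n+1) (2*j+1) = sbT n (j+1) := by
  have h1 : (2*j+1) % 2 = 1 := by omega
  have h2 : (2*j+1+1) / 2 = j+1 := by omega
  simp [sbT, h1, h2]

lemma sbT_pos (n : ℕ) : ∀ k, 0 < sbT n k := by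
  induction n with
  | zero => intro k; simp [sbT]
  | succ n ih =>
    intro k
    by_cases h : k % 2 = 1
    · simp only [sbT, if_pos h]; exact ih _
    · simp only [sbT, if_neg h]; exact Nat.add_pos_left (ih _) _

lemma sb_det (n : ℕ) : ∀ k, 1 ≤ k → k ≤ 2^n →
    sbS n (k+1) * sbT n k = sbS n k * sbT n (k+1) + 1 := by
  induction n with
  | zero =>
    intro k h1 h2
    interval_cases k
    simp [sbS, sbT]
  | succ n ih =>
    intro k h1 h2
    have hp : 2^(n+1) = 2*2^n := by ring
    rcases Nat.even_or_odd k with he | ho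
    · obtain ⟨j, rfl⟩ : ∃ j, k = 2*(j+1) := by
        rcases he with ⟨j, hj⟩; exact ⟨j-1, by omega⟩
      have hj : j + 1 ≤ 2^n := by omega
      have e1 : 2*(j+1)+1 = 2*(j+1)+1 := rfl
      rw [show 2*(j+1)+1 = 2*(j+1)+1 from rfl]
      rw [show (2*(j+1)+1 : ℕ) = 2*(j+1)+1 from rfl]
      rw [sbS_odd n (j+1), sbT_even n (j+1), sbS_even n (j+1), sbT_odd n (j+1)]
      have := ih (j+1) (by omega) hj
      rw [Nat.mul_add, Nat.add_mul]
      omega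
    · obtain ⟨j, rfl⟩ : ∃ j, k = 2*j+1 := by
        rcases ho with ⟨j, hj⟩; exact ⟨j, by omega⟩
      have hj : j + 1 ≤ 2^n := by omega
      have h22 : 2*j+1+1 = 2*(j+1) := by ring
      rw [h22, sbS_even n (j+1), sbT_odd n j, sbS_odd n j, sbT_even n (j+1)]
      have := ih (j+1) (by omega) hj
      rw [Nat.add_mul, Nat.mul_add]
      omega

noncomputable def f (n k : ℕ) : ℝ := (sbS n k : ℝ) / (sbT n k : ℝ)

lemma f_lt_succ (n k : ℕ) (h1 : 1 ≤ k) (h2 : k ≤ 2^n) : f n k < f n (k+1) := by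
  have d1 : (0:ℝ) < (sbT n k : ℝ) := by exact_mod_cast sbT_pos n k
  have d2 : (0:ℝ) < (sbT n (k+1) : ℝ) := by exact_mod_cast sbT_pos n (k+1)
  rw [f, f, div_lt_div_iff₀ d1 d2]
  have := sb_det n k h1 h2
  have : (sbS n (k+1) * sbT n k : ℝ) = (sbS n k * sbT n (k+1) : ℝ) + 1 := by
    exact_mod_cast this
  push_cast at this ⊢
  nlinarith

lemma f_lt (n : ℕ) : ∀ d k, 1 ≤ k → k + d + 1 ≤ 2^n + 1 → f n k < f n (k+d+1) := by
  intro d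
  induction d with
  | zero => intro k h1 h2; exact f_lt_succ n k h1 (by omega)
  | succ d ih =>
    intro k h1 h2
    have h3 : f n k < f n (k+d+1) := ih k h1 (by omega)
    have h4 : f n (k+d+1) < f n (k+d+2) := f_lt_succ n (k+d+1) (by omega) (by omega)
    calc f n k < f n (k+d+1) := h3
      _ < f n (k+d+1+1) := h4

lemma f_injOn (n : ℕ) : Set.InjOn (f n) ↑(Finset.Icc 1 (2^n+1)) := by
  intro j hj k hk h
  simp only [Finset.coe_Icc, Set.mem_Icc] at hj hk
  by_contra hne
  rcases Nat.lt_or_ge j k with hlt | hge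
  · have := f_lt n (k - j - 1) j hj.1 (by omega)
    rw [show j + (k - j - 1) + 1 = k by omega] at this
    exact absurd h (ne_of_lt this)
  · have hlt : k < j := by omega
    have := f_lt n (j - k - 1) k hk.1 (by omega)
    rw [show k + (j - k - 1) + 1 = j by omega] at this
    exact absurd h.symm (ne_of_lt this)

lemma sbSeq_eq_image (n : ℕ) : sbSeq n = f n '' ↑(Finset.Icc 1 (2^n+1)) := by
  ext x
  simp only [sbSeq, Set.mem_setOf_eq, Set.mem_image, Finset.mem_coe]
  constructor
  · rintro ⟨k, hk, rfl⟩; exact ⟨k, hk, rfl⟩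
  · rintro ⟨k, hk, rfl⟩; exact ⟨k, hk, rfl⟩

lemma sbSeq_ncard (n : ℕ) : (sbSeq n).ncard = 2^n + 1 := by
  rw [sbSeq_eq_image, Set.ncard_image_of_injOn (f_injOn n), Set.ncard_coe_finset,
    Nat.card_Icc]
  simp

def enc : List ℕ → ℕ
  | [] => 0
  | a :: t => 2^(a-1) * (2 * enc t + 1)

lemma pow_odd_inj : ∀ i j x y : ℕ, 2^i * (2*x+1) = 2^j * (2*y+1) → i = j ∧ x = y := by
  intro i
  induction i with
  | zero =>
    intro j x y h
    cases j with
    | zero => simp at h; omega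
    | succ j =>
      exfalso
      have h2 : 2^(j+1) * (2*y+1) = 2 * (2^j * (2*y+1)) := by ring
      rw [h2] at h
      omega
  | succ i ih =>
    intro j x y h
    cases j with
    | zero =>
      exfalso
      have h2 : 2^(i+1) * (2*x+1) = 2 * (2^i * (2*x+1)) := by ring
      rw [h2] at h
      omega
    | succ j =>
      have h2 : 2 * (2^i * (2*x+1)) = 2 * (2^j * (2*y+1)) := by
        have e1 : 2^(i+1) * (2*x+1) = 2 * (2^i * (2*x+1)) := by ring
        have e2 : 2^(j+1) * (2*y+1) = 2 * (2^j * (2*y+1)) := by ring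
        omega
      have := ih j x y (by omega)
      omega

lemma enc_pos {l : List ℕ} (h : l ≠ []) : 0 < enc l := by
  cases l with
  | nil => simp at h
  | cons a t => simp only [enc]; positivity

lemma enc_inj : ∀ l l' : List ℕ, Pos l → Pos l' → enc l = enc l' → l = l' := by
  intro l
  induction l with
  | nil =>
    intro l' _ _ h
    cases l' with
    | nil => rfl
    | cons b t' =>
      exfalso
      have h1 := enc_pos (l := b :: t') (by simp)
      rw [show enc ([] : List ℕ) = 0 from rfl] at h
      omega
  | cons a t ih =>
    intro l' hl hl' h
    cases l' with
    | nil =>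
      exfalso
      have h1 := enc_pos (l := a :: t) (by simp)
      rw [show enc ([] : List ℕ) = 0 from rfl] at h
      omega
    | cons b t' =>
      simp only [enc] at h
      have := pow_odd_inj (a-1) (b-1) (enc t) (enc t') h
      have ha : 1 ≤ a := hl a (by simp)
      have hb : 1 ≤ b := hl' b (by simp)
      have hab : a = b := by omega
      have ht : t = t' := ih t' (fun x hx => hl x (by simp [hx]))
        (fun x hx => hl' x (by simp [hx])) (by omega)
      rw [hab, ht]

lemma getLastD_le_sum : ∀ l : List ℕ, l.getLastD 0 ≤ l.sum := by
  intro l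
  induction l using List.reverseRecOn with
  | nil => simp
  | append_singleton t b ih => simp [List.getLastD_concat]

lemma enc_range : ∀ l : List ℕ, Pos l → 2 ≤ l.getLastD 0 →
    ∃ s2, l.sum = s2 + 2 ∧ 2^(s2+1) ≤ enc l ∧ enc l < 2^(s2+1) + 2^s2 := by
  intro l
  induction l with
  | nil => intro _ h; simp at h
  | cons a t ih =>
    intro hpos hlast
    have ha : 1 ≤ a := hpos a (by simp)
    cases t with
    | nil =>
      have ha2 : 2 ≤ a := by simpa using hlast
      refine ⟨a - 2, by simp; omega, ?_, ?_⟩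
      · have : enc [a] = 2^(a-1) := by simp [enc]
        rw [this, show a - 1 = (a-2)+1 by omega]
      · have : enc [a] = 2^(a-1) := by simp [enc]
        rw [this, show a - 1 = (a-2)+1 by omega]
        have : 0 < 2^(a-2) := Nat.pow_pos (by norm_num)
        omega
    | cons c t0 =>
      have hlast' : 2 ≤ (c :: t0).getLastD 0 := by
        rw [List.getLastD_cons] at hlast
        cases t0 with
        | nil => simpa using hlast
        | cons d t1 =>
          rw [List.getLastD_cons] at hlast ⊢
          exact hlast
      obtain ⟨s2, hsum, lb, ub⟩ := ih (fun x hx => hpos x (by simp at hx; simp; tauto)) hlast'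
      refine ⟨(a - 1) + s2 + 1, by simp [List.sum_cons] at hsum ⊢; omega, ?_, ?_⟩
      · have : enc (a :: c :: t0) = 2^(a-1) * (2 * enc (c :: t0) + 1) := rfl
        rw [this]
        have e1 : 2^(a-1+s2+1+1) = 2^(a-1) * (2^(s2+1) * 2) := by ring
        rw [e1]
        have : 2^(s2+1) * 2 ≤ 2 * enc (c :: t0) + 1 := by omega
        exact Nat.mul_le_mul_left _ this
      · have hE : enc (a :: c :: t0) = 2^(a-1) * (2 * enc (c :: t0) + 1) := rfl
        rw [hE]
        have e1 : 2^(a-1+s2+1+1) + 2^(a-1+s2+1) = 2^(a-1) * (2^(s2+1) * 2 + 2^(s2+1)) := by ring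
        rw [e1]
        have h2 : 2 * enc (c :: t0) + 1 < 2^(s2+1) * 2 + 2^(s2+1) := by
          have : 0 < 2^s2 := Nat.pow_pos (by norm_num)
          have e2 : 2^(s2+1) = 2 * 2^s2 := by ring
          omega
        have hp : 0 < 2^(a-1) := Nat.pow_pos (by norm_num)
        exact (Nat.mul_lt_mul_left hp).mpr h2

/-- the set of continued fraction values of compositions of `s` with last part `≥ 2` -/
def CFs (s : ℕ) : Set ℝ :=
  {x | ∃ l : List ℕ, (∀ a ∈ l, 1 ≤ a) ∧ l.sum = s ∧ 2 ≤ l.getLastD 0 ∧ x = cfVal l}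

def LSet (s : ℕ) : Set (List ℕ) :=
  {l | (∀ a ∈ l, 1 ≤ a) ∧ l.sum = s ∧ 2 ≤ l.getLastD 0}

lemma CFs_eq_image (s : ℕ) : CFs s = cfVal '' LSet s := by
  ext x
  simp only [CFs, LSet, Set.mem_setOf_eq, Set.mem_image]
  constructor
  · rintro ⟨l, h1, h2, h3, rfl⟩; exact ⟨l, ⟨h1, h2, h3⟩, rfl⟩
  · rintro ⟨l, ⟨h1, h2, h3⟩, rfl⟩; exact ⟨l, h1, h2, h3, rfl⟩

lemma LSet_finite_card (s2 : ℕ) :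
    (LSet (s2+2)).Finite ∧ (LSet (s2+2)).ncard ≤ 2^s2 := by
  have hsub : enc '' LSet (s2+2) ⊆ ↑(Finset.Ico (2^(s2+1)) (2^(s2+1) + 2^s2)) := by
    rintro x ⟨l, ⟨h1, h2, h3⟩, rfl⟩
    obtain ⟨s2', hsum, lb, ub⟩ := enc_range l h1 h3
    have : s2' = s2 := by omega
    subst this
    simp only [Finset.coe_Ico, Set.mem_Ico]
    exact ⟨lb, ub⟩
  have hinj : Set.InjOn enc (LSet (s2+2)) := by
    intro l hl l' hl' h
    exact enc_inj l l' hl.1 hl'.1 h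
  have hfin : (LSet (s2+2)).Finite := by
    apply Set.Finite.of_finite_image _ hinj
    exact Set.Finite.subset (Finset.finite_toSet _) hsub
  refine ⟨hfin, ?_⟩
  calc (LSet (s2+2)).ncard = (enc '' LSet (s2+2)).ncard :=
        (Set.ncard_image_of_injOn hinj).symm
    _ ≤ (↑(Finset.Ico (2^(s2+1)) (2^(s2+1) + 2^s2)) : Set ℕ).ncard :=
        Set.ncard_le_ncard hsub (Finset.finite_toSet _)
    _ = 2^s2 := by rw [Set.ncard_coe_finset, Nat.card_Ico]; simp

lemma CFs_finite (s2 : ℕ) : (CFs (s2+2)).Finite := by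
  rw [CFs_eq_image]
  exact Set.Finite.image _ (LSet_finite_card s2).1

lemma CFs_ncard (s2 : ℕ) : (CFs (s2+2)).ncard ≤ 2^s2 := by
  rw [CFs_eq_image]
  calc (cfVal '' LSet (s2+2)).ncard ≤ (LSet (s2+2)).ncard :=
        Set.ncard_image_le (LSet_finite_card s2).1
    _ ≤ 2^s2 := (LSet_finite_card s2).2

/-- The putative description of the Stern–Brocot sets. -/
def U : ℕ → Set ℝ
  | 0 => {0, 1}
  | m+1 => U m ∪ CFs (m+2)

lemma U_mono {m m' : ℕ} (h : m ≤ m') : U m ⊆ U m' := by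
  induction m' with
  | zero => have : m = 0 := by omega
            subst this; exact fun x hx => hx
  | succ m' ih =>
    rcases Nat.lt_or_ge m (m'+1) with h1 | h1
    · exact fun x hx => Or.inl (ih (by omega) hx)
    · have : m = m'+1 := by omega
      subst this; exact fun x hx => hx

lemma zero_one_mem_U (m : ℕ) : (0:ℝ) ∈ U m ∧ (1:ℝ) ∈ U m := by
  have h0 : (0:ℝ) ∈ U 0 := by simp [U]
  have h1 : (1:ℝ) ∈ U 0 := by simp [U]
  exact ⟨U_mono (Nat.zero_le m) h0, U_mono (Nat.zero_le m) h1⟩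

lemma CFs_subset_U {s m : ℕ} (h2 : 2 ≤ s) (hm : s ≤ m + 1) : CFs s ⊆ U m := by
  induction m with
  | zero => omega
  | succ m ih =>
    rcases Nat.lt_or_ge s (m+2) with h | h
    · exact fun x hx => Or.inl (ih (by omega) hx)
    · have : s = m + 2 := by omega
      subst this
      exact fun x hx => Or.inr hx

lemma U_finite (m : ℕ) : (U m).Finite := by
  induction m with
  | zero => exact (Set.finite_singleton _).insert _
  | succ m ih => exact ih.union (CFs_finite m)

lemma U_ncard (m : ℕ) : (U m).ncard ≤ 2^m + 1 := by
  induction m with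
  | zero =>
    have : (U 0).ncard ≤ 2 := by
      have := Set.ncard_insert_le (0:ℝ) ({1} : Set ℝ)
      simpa [U] using this
    omega
  | succ m ih =>
    have h1 : (U (m+1)).ncard ≤ (U m).ncard + (CFs (m+2)).ncard :=
      Set.ncard_union_le _ _
    have h2 := CFs_ncard m
    have h3 : 2^(m+1) = 2^m * 2 := by ring
    omega

lemma cfVal_norm : ∀ N l, l.length ≤ N → Pos l →
    cfVal l = 0 ∨ cfVal l = 1 ∨
      ∃ l', Pos l' ∧ 2 ≤ l'.getLastD 0 ∧ l'.sum = l.sum ∧ cfVal l' = cfVal l := by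
  intro N
  induction N with
  | zero =>
    intro l hlen _
    have : l = [] := List.length_eq_zero_iff.1 (by omega)
    subst this
    exact Or.inl rfl
  | succ N ih =>
    intro l hlen hpos
    rcases l.eq_nil_or_concat with rfl | ⟨t, b, rfl⟩
    · exact Or.inl rfl
    · simp only [List.concat_eq_append] at hlen hpos ⊢
      have hb : 1 ≤ b := hpos b (by simp)
      by_cases hb2 : 2 ≤ b
      · exact Or.inr (Or.inr ⟨t ++ [b], hpos, by rw [List.getLastD_concat]; exact hb2, rfl, rfl⟩)
      · have hb1 : b = 1 := by omega
        subst hb1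
        rcases t.eq_nil_or_concat with rfl | ⟨t0, c, rfl⟩
        · apply Or.inr; apply Or.inl
          show cfVal ([].concat 1) = 1
          norm_num [cfVal]
        · simp only [List.concat_eq_append] at hlen hpos ⊢
          have hc : 1 ≤ c := hpos c (by simp)
          have hpos0 : Pos t0 := by
            intro x hx; apply hpos; simp [hx]
          have hposA : Pos (t0 ++ [c] ++ [1]) := hpos
          have hposB : Pos (t0 ++ [c + 1]) := pos_append hpos0 (pos_single (by omega))
          have hval : cfVal (t0 ++ [c] ++ [1]) = cfVal (t0 ++ [c + 1]) := by
            rw [cfVal_eq_nd hposA, cfVal_eq_nd hposB, ndShift]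
          have hsum : (t0 ++ [c + 1]).sum = (t0 ++ [c] ++ [1]).sum := by
            simp
            try omega
          have hlen' : (t0 ++ [c + 1]).length ≤ N := by
            simp at hlen ⊢
            try omega
          rcases ih (t0 ++ [c + 1]) hlen' hposB with h0 | h1 | ⟨l', h1', h2', h3', h4'⟩
          · exact Or.inl (by rw [hval, h0])
          · exact Or.inr (Or.inl (by rw [hval, h1]))
          · exact Or.inr (Or.inr ⟨l', h1', h2', by rw [h3', hsum], by rw [h4', hval]⟩)

def E (m k : ℕ) : ℕ × ℕ := (sbS m k, sbT m k)

lemma pairAdd_comm (p q : ℕ × ℕ) : pairAdd p q = pairAdd q p := by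
  simp [pairAdd, Nat.add_comm]

lemma E_odd (m j : ℕ) : E (m+1) (2*j+1) = E m (j+1) := by
  simp [E, sbS_odd, sbT_odd]

lemma E_even (m j : ℕ) : E (m+1) (2*j) = pairAdd (E m j) (E m (j+1)) := by
  simp [E, sbS_even, sbT_even, pairAdd]

def PairOk (m : ℕ) (p q : ℕ × ℕ) : Prop :=
  ∃ w a, 1 ≤ a ∧ Pos w ∧
    ((((p = nd w ∧ q = nd (w ++ [a])) ∨ (q = nd w ∧ p = nd (w ++ [a]))) ∧ w.sum + a = m) ∨
     (((p = nd (w ++ [a]) ∧ q = nd (w ++ [a+1])) ∨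
       (q = nd (w ++ [a]) ∧ p = nd (w ++ [a+1]))) ∧ w.sum + a + 1 = m))

lemma pairOk_split {m : ℕ} {p q : ℕ × ℕ} (h : PairOk m p q) :
    PairOk (m+1) p (pairAdd p q) ∧ PairOk (m+1) (pairAdd p q) q := by
  obtain ⟨w, a, ha, hw, hc⟩ := h
  have hsw : ∀ x : ℕ, (w ++ [x]).sum = w.sum + x := by intro x; simp
  rcases hc with ⟨hor, hs⟩ | ⟨hor, hs⟩
  · rcases hor with ⟨hp, hq⟩ | ⟨hq, hp⟩
    · have hM : pairAdd p q = nd (w ++ [a+1]) := by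
        rw [hp, hq]; exact (ndM1 w a).symm
      constructor
      · exact ⟨w, a+1, by omega, hw, Or.inl ⟨Or.inl ⟨hp, hM⟩, by omega⟩⟩
      · exact ⟨w, a, ha, hw, Or.inr ⟨Or.inr ⟨hq, hM⟩, by omega⟩⟩
    · have hM : pairAdd p q = nd (w ++ [a+1]) := by
        rw [hp, hq, pairAdd_comm]; exact (ndM1 w a).symm
      constructor
      · exact ⟨w, a, ha, hw, Or.inr ⟨Or.inl ⟨hp, hM⟩, by omega⟩⟩
      · exact ⟨w, a+1, by omega, hw, Or.inl ⟨Or.inr ⟨hq, hM⟩, by omega⟩⟩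
  · have hw' : Pos (w ++ [a]) := pos_append hw (pos_single ha)
    have hs' : (w ++ [a]).sum = w.sum + a := hsw a
    rcases hor with ⟨hp, hq⟩ | ⟨hq, hp⟩
    · have hM : pairAdd p q = nd ((w ++ [a]) ++ [2]) := by
        rw [hp, hq]; exact (ndM2 w a).symm
      have hqs : q = nd ((w ++ [a]) ++ [1]) := by rw [hq, ndShift]
      constructor
      · exact ⟨w ++ [a], 2, by omega, hw', Or.inl ⟨Or.inl ⟨hp, hM⟩, by omega⟩⟩
      · refine ⟨w ++ [a], 1, le_refl 1, hw', Or.inr ⟨Or.inr ⟨hqs, ?_⟩, by omega⟩⟩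
        rw [show (1:ℕ)+1 = 2 from rfl]; exact hM
    · have hM : pairAdd p q = nd ((w ++ [a]) ++ [2]) := by
        rw [hp, hq, pairAdd_comm]; exact (ndM2 w a).symm
      have hps : p = nd ((w ++ [a]) ++ [1]) := by rw [hp, ndShift]
      constructor
      · refine ⟨w ++ [a], 1, le_refl 1, hw', Or.inr ⟨Or.inl ⟨hps, ?_⟩, by omega⟩⟩
        rw [show (1:ℕ)+1 = 2 from rfl]; exact hM
      · exact ⟨w ++ [a], 2, by omega, hw', Or.inl ⟨Or.inr ⟨hq, hM⟩, by omega⟩⟩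

lemma sb_inv (m : ℕ) : ∀ k, 1 ≤ k → k ≤ 2^m → PairOk (m+1) (E m k) (E m (k+1)) := by
  induction m with
  | zero =>
    intro k h1 h2
    interval_cases k
    refine ⟨[], 1, le_refl 1, by intro x hx; simp at hx, Or.inl ⟨Or.inl ⟨?_, ?_⟩, by simp⟩⟩
    · show E 0 1 = nd []
      simp [E, nd, sbS, sbT]
    · show E 0 2 = nd ([] ++ [1])
      simp [E, nd, sbS, sbT]
  | succ m ih =>
    intro k h1 h2
    have hp : 2^(m+1) = 2*2^m := by ring
    rcases Nat.even_or_odd k with he | ho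
    · obtain ⟨j, rfl⟩ : ∃ j, k = 2*(j+1) := by
        rcases he with ⟨j, hj⟩; exact ⟨j - 1, by omega⟩
      have hj : j + 1 ≤ 2^m := by omega
      have h := (pairOk_split (ih (j+1) (by omega) hj)).2
      rw [E_even m (j+1)]
      rw [show 2*(j+1)+1 = 2*(j+1)+1 from rfl, E_odd m (j+1)]
      exact h
    · obtain ⟨j, rfl⟩ : ∃ j, k = 2*j+1 := by
        rcases ho with ⟨j, hj⟩; exact ⟨j, by omega⟩
      have hj : j + 1 ≤ 2^m := by omega
      have h := (pairOk_split (ih (j+1) (by omega) hj)).1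
      rw [E_odd m j, show 2*j+1+1 = 2*(j+1) by ring, E_even m (j+1)]
      exact h

lemma pairOk_repr {m : ℕ} {p q : ℕ × ℕ} (h : PairOk m p q) :
    (∃ l, Pos l ∧ l.sum ≤ m ∧ p = nd l) ∧ (∃ l, Pos l ∧ l.sum ≤ m ∧ q = nd l) := by
  obtain ⟨w, a, ha, hw, hc⟩ := h
  have hwa : Pos (w ++ [a]) := pos_append hw (pos_single ha)
  have hwa1 : Pos (w ++ [a+1]) := pos_append hw (pos_single (by omega))
  have hsw : (w ++ [a]).sum = w.sum + a := by simp
  have hsw1 : (w ++ [a+1]).sum = w.sum + a + 1 := by simp; ring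
  rcases hc with ⟨hor, hs⟩ | ⟨hor, hs⟩
  · rcases hor with ⟨hp, hq⟩ | ⟨hq, hp⟩
    · exact ⟨⟨w, hw, by omega, hp⟩, ⟨w ++ [a], hwa, by omega, hq⟩⟩
    · exact ⟨⟨w ++ [a], hwa, by omega, hp⟩, ⟨w, hw, by omega, hq⟩⟩
  · rcases hor with ⟨hp, hq⟩ | ⟨hq, hp⟩
    · exact ⟨⟨w ++ [a], hwa, by omega, hp⟩, ⟨w ++ [a+1], hwa1, by omega, hq⟩⟩
    · exact ⟨⟨w ++ [a+1], hwa1, by omega, hp⟩, ⟨w ++ [a], hwa, by omega, hq⟩⟩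

lemma entry_nd (m k : ℕ) (h1 : 1 ≤ k) (h2 : k ≤ 2^m + 1) :
    ∃ l, Pos l ∧ l.sum ≤ m + 1 ∧ E m k = nd l := by
  rcases Nat.lt_or_ge k (2^m + 1) with h | h
  · exact (pairOk_repr (sb_inv m k h1 (by omega))).1
  · have hk : k = 2^m + 1 := by omega
    subst hk
    have h2m : 1 ≤ 2^m := Nat.one_le_two_pow
    exact (pairOk_repr (sb_inv m (2^m) h2m (le_refl _))).2

lemma sbSeq_subset_U (m : ℕ) : sbSeq m ⊆ U m := by
  rintro x ⟨k, hk, rfl⟩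
  rw [Finset.mem_Icc] at hk
  obtain ⟨l, hl, hsum, hnd⟩ := entry_nd m k hk.1 hk.2
  have hx : (sbS m k : ℝ) / (sbT m k : ℝ) = cfVal l := by
    rw [cfVal_eq_nd hl, ← hnd]
    rfl
  rw [hx]
  rcases cfVal_norm l.length l (le_refl _) hl with h0 | h1 | ⟨l', h1', h2', h3', h4'⟩
  · rw [h0]; exact (zero_one_mem_U m).1
  · rw [h1]; exact (zero_one_mem_U m).2
  · rw [← h4']
    have hge : 2 ≤ l'.sum := le_trans h2' (getLastD_le_sum l')
    exact CFs_subset_U hge (by omega) ⟨l', h1', rfl, h2', rfl⟩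

lemma sbSeq_eq_U (m : ℕ) : sbSeq m = U m := by
  apply Set.eq_of_subset_of_ncard_le (sbSeq_subset_U m) _ (U_finite m)
  rw [sbSeq_ncard]
  exact U_ncard m

lemma U_ncard_eq (m : ℕ) : (U m).ncard = 2^m + 1 := by
  rw [← sbSeq_eq_U, sbSeq_ncard]

end SBAux


/-- For `n ≥ 2`, the set `𝔗_{n-1} \ 𝔗_{n-2}` equals the set of finite continued
fractions `[a_1, ..., a_k]` over tuples of positive integers with
`a_1 + ... + a_k = n` and `a_k ≥ 2`, and it has cardinality `2^{n-2}`. -/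
theorem sternBrocot_diff_eq_continued_fractions (n : ℕ) (hn : 2 ≤ n) :
    sbSeq (n - 1) \ sbSeq (n - 2) =
      {x | ∃ l : List ℕ, (∀ a ∈ l, 1 ≤ a) ∧ l.sum = n ∧ 2 ≤ l.getLastD 0 ∧
        x = cfVal l} ∧
    Nat.card (sbSeq (n - 1) \ sbSeq (n - 2) : Set ℝ) = 2 ^ (n - 2) := by
  obtain ⟨k, rfl⟩ : ∃ k, n = k + 2 := ⟨n - 2, by omega⟩
  have e1 : k + 2 - 1 = k + 1 := by omega
  have e2 : k + 2 - 2 = k := by omega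
  rw [e1, e2, SBAux.sbSeq_eq_U, SBAux.sbSeq_eq_U]
  have hUk1 : SBAux.U (k+1) = SBAux.U k ∪ SBAux.CFs (k+2) := rfl
  have hsub : SBAux.U (k+1) \ SBAux.U k ⊆ SBAux.CFs (k+2) := by
    rintro x ⟨hx, hnx⟩
    rw [hUk1] at hx
    exact hx.resolve_left hnx
  have hdiff : (SBAux.U (k+1) \ SBAux.U k).ncard = 2^k := by
    rw [Set.ncard_diff (SBAux.U_mono (Nat.le_succ k)) (SBAux.U_finite k),
      SBAux.U_ncard_eq, SBAux.U_ncard_eq]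
    have : 2^(k+1) = 2*2^k := by ring
    omega
  have heq : SBAux.U (k+1) \ SBAux.U k = SBAux.CFs (k+2) := by
    apply Set.eq_of_subset_of_ncard_le hsub _ (SBAux.CFs_finite k)
    rw [hdiff]
    exact SBAux.CFs_ncard k
  refine ⟨heq, ?_⟩
  rw [Nat.card_coe_set_eq, hdiff]
end

section
/- For every n ≥ 1, the smallest Stern–Brocot interval of order n has length 1/(f_{n+1} f_{n+2}), where f_k denotes the k-th Fibonacci number; i.e., min over k=1,...,2^n of |T_{n,k}| = 1/(f_{n+1} f_{n+2}). -/
lemma sbT_pos (n : ℕ) : ∀ k, 1 ≤ sbT n k := by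
  induction n with
  | zero => intro k; simp [sbT]
  | succ n ih =>
    intro k
    rw [sbT]
    split
    · exact ih _
    · have := ih (k / 2); omega

lemma sb_det (n : ℕ) : ∀ k, 1 ≤ k → k ≤ 2 ^ n →
    sbS n (k + 1) * sbT n k = sbS n k * sbT n (k + 1) + 1 := by
  induction n with
  | zero =>
    intro k h1 h2
    have : k = 1 := by omega
    subst this
    simp [sbS, sbT]
  | succ n ih =>
    intro k h1 h2
    rcases Nat.even_or_odd k with he | ho
    · -- k even, k = 2j
      obtain ⟨j, hj⟩ := he
      have hj1 : 1 ≤ j := by omega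
      have hj2 : j ≤ 2 ^ n := by have := Nat.pow_succ 2 n; omega
      have e1 : k % 2 = 0 := by omega
      have e2 : (k + 1) % 2 = 1 := by omega
      have e3 : k / 2 = j := by omega
      have e4 : (k + 1 + 1) / 2 = j + 1 := by omega
      have h := ih j hj1 hj2
      rw [sbS, sbS, sbT, sbT]
      simp only [e1, e2, e3, e4]
      norm_num
      nlinarith [h]
    · -- k odd, k = 2j - 1
      obtain ⟨j, hj⟩ := ho
      -- k = 2j+1, let m = j+1, k = 2m-1
      have hm1 : 1 ≤ j + 1 := by omega
      have hm2 : j + 1 ≤ 2 ^ n := by have := Nat.pow_succ 2 n; omega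
      have e1 : k % 2 = 1 := by omega
      have e2 : (k + 1) % 2 = 0 := by omega
      have e3 : (k + 1) / 2 = j + 1 := by omega
      have h := ih (j + 1) hm1 hm2
      rw [sbS, sbS, sbT, sbT]
      simp only [e1, e2, e3]
      norm_num
      nlinarith [h]

lemma sbT_pair (n : ℕ) : ∀ k, 1 ≤ k → k ≤ 2 ^ n →
    (sbT n k ≤ Nat.fib (n + 1) ∧ sbT n (k + 1) ≤ Nat.fib (n + 2)) ∨
    (sbT n k ≤ Nat.fib (n + 2) ∧ sbT n (k + 1) ≤ Nat.fib (n + 1)) := by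
  induction n with
  | zero =>
    intro k h1 h2
    have : k = 1 := by omega
    subst this
    left; simp [sbT]
  | succ n ih =>
    intro k h1 h2
    have hfib : Nat.fib (n + 1 + 2) = Nat.fib (n + 1) + Nat.fib (n + 1 + 1) := Nat.fib_add_two
    have hfib2 : Nat.fib (n + 2) = Nat.fib (n + 1 + 1) := rfl
    have hmono : Nat.fib (n + 1) ≤ Nat.fib (n + 2) := Nat.fib_le_fib_succ
    rcases Nat.even_or_odd k with he | ho
    · obtain ⟨j, hj⟩ := he
      have hj1 : 1 ≤ j := by omega
      have hj2 : j ≤ 2 ^ n := by have := Nat.pow_succ 2 n; omega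
      have e1 : k % 2 = 0 := by omega
      have e2 : (k + 1) % 2 = 1 := by omega
      have e3 : k / 2 = j := by omega
      have e4 : (k + 1 + 1) / 2 = j + 1 := by omega
      have h := ih j hj1 hj2
      rw [sbT, sbT]
      simp only [e1, e2, e3, e4]
      norm_num
      right
      rcases h with ⟨ha, hb⟩ | ⟨ha, hb⟩ <;> omega
    · obtain ⟨j, hj⟩ := ho
      have hm1 : 1 ≤ j + 1 := by omega
      have hm2 : j + 1 ≤ 2 ^ n := by have := Nat.pow_succ 2 n; omega
      have e1 : k % 2 = 1 := by omega
      have e2 : (k + 1) % 2 = 0 := by omega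
      have e3 : (k + 1) / 2 = j + 1 := by omega
      have h := ih (j + 1) hm1 hm2
      rw [sbT, sbT]
      simp only [e1, e2, e3]
      norm_num
      left
      rcases h with ⟨ha, hb⟩ | ⟨ha, hb⟩ <;> omega

lemma sbT_exists (n : ℕ) : ∃ k, 1 ≤ k ∧ k ≤ 2 ^ n ∧
    ((sbT n k = Nat.fib (n + 1) ∧ sbT n (k + 1) = Nat.fib (n + 2)) ∨
     (sbT n k = Nat.fib (n + 2) ∧ sbT n (k + 1) = Nat.fib (n + 1))) := by
  induction n with
  | zero => exact ⟨1, le_refl _, by norm_num, Or.inl (by simp [sbT])⟩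
  | succ n ih =>
    obtain ⟨k, hk1, hk2, hp⟩ := ih
    have hfib : Nat.fib (n + 1 + 2) = Nat.fib (n + 1) + Nat.fib (n + 1 + 1) := Nat.fib_add_two
    have hfib2 : Nat.fib (n + 2) = Nat.fib (n + 1 + 1) := rfl
    rcases hp with ⟨ha, hb⟩ | ⟨ha, hb⟩
    · refine ⟨2 * k, by omega, by have := Nat.pow_succ 2 n; omega, ?_⟩
      have e1 : (2 * k) % 2 = 0 := by omega
      have e2 : (2 * k + 1) % 2 = 1 := by omega
      have e3 : (2 * k) / 2 = k := by omega
      have e4 : (2 * k + 1 + 1) / 2 = k + 1 := by omega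
      rw [sbT, sbT]
      simp only [e1, e2, e3, e4]
      norm_num
      right
      omega
    · refine ⟨2 * k - 1, by omega, by have := Nat.pow_succ 2 n; omega, ?_⟩
      have e1 : (2 * k - 1) % 2 = 1 := by omega
      have e2 : (2 * k - 1 + 1) % 2 = 0 := by omega
      have e3 : (2 * k - 1 + 1) / 2 = k := by omega
      have e5 : (2 * k - 1 + 1) / 2 + 1 = k + 1 := by omega
      rw [sbT, sbT]
      simp only [e1, e2, e3, e5]
      norm_num
      left
      omega

/-- The length of the Stern–Brocot interval `T_{n,k}`. -/
noncomputable def sbLen (n k : ℕ) : ℝ :=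
  (sbS n (k + 1) : ℝ) / sbT n (k + 1) - (sbS n k : ℝ) / sbT n k

lemma sbLen_eq (n k : ℕ) (h1 : 1 ≤ k) (h2 : k ≤ 2 ^ n) :
    sbLen n k = 1 / ((sbT n k : ℝ) * sbT n (k + 1)) := by
  have hT : (0 : ℝ) < sbT n k := by exact_mod_cast sbT_pos n k
  have hT' : (0 : ℝ) < sbT n (k + 1) := by exact_mod_cast sbT_pos n (k + 1)
  have hdet := sb_det n k h1 h2
  have hdet' : (sbS n (k + 1) : ℝ) * sbT n k = sbS n k * sbT n (k + 1) + 1 := by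
    exact_mod_cast congrArg (Nat.cast : ℕ → ℝ) hdet
  rw [sbLen, div_sub_div _ _ hT'.ne' hT.ne',
    show (sbS n (k + 1) : ℝ) * sbT n k - sbT n (k + 1) * sbS n k = 1 from by linarith,
    mul_comm]

/-- For `n ≥ 1`, the smallest Stern–Brocot interval of order `n` has length
`1/(fib (n+1) * fib (n+2))`. -/
theorem sternBrocot_min_length (n : ℕ) (hn : 1 ≤ n) :
    (∀ k ∈ Finset.Icc 1 (2 ^ n),
      1 / ((Nat.fib (n + 1) : ℝ) * Nat.fib (n + 2)) ≤ sbLen n k) ∧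
    (∃ k ∈ Finset.Icc 1 (2 ^ n),
      sbLen n k = 1 / ((Nat.fib (n + 1) : ℝ) * Nat.fib (n + 2))) := by
  constructor
  · intro k hk
    rw [Finset.mem_Icc] at hk
    rw [sbLen_eq n k hk.1 hk.2]
    have hpos : (0 : ℝ) < (sbT n k : ℝ) * sbT n (k + 1) := by
      have := sbT_pos n k
      have := sbT_pos n (k + 1)
      positivity
    apply one_div_le_one_div_of_le hpos
    have hle : sbT n k * sbT n (k + 1) ≤ Nat.fib (n + 1) * Nat.fib (n + 2) := by
      rcases sbT_pair n k hk.1 hk.2 with ⟨ha, hb⟩ | ⟨ha, hb⟩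
      · exact Nat.mul_le_mul ha hb
      · calc sbT n k * sbT n (k + 1) ≤ Nat.fib (n + 2) * Nat.fib (n + 1) :=
              Nat.mul_le_mul ha hb
          _ = Nat.fib (n + 1) * Nat.fib (n + 2) := Nat.mul_comm _ _
    exact_mod_cast hle
  · obtain ⟨k, hk1, hk2, hp⟩ := sbT_exists n
    refine ⟨k, Finset.mem_Icc.mpr ⟨hk1, hk2⟩, ?_⟩
    rw [sbLen_eq n k hk1 hk2]
    rcases hp with ⟨ha, hb⟩ | ⟨ha, hb⟩ <;> rw [ha, hb] <;> push_cast <;> ring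
end

section
/- For θ > 1/2, the Diophantine pressure satisfies 0 ≤ log ζ(θ) − P_D(θ) ≤ 2θ log 2, where ζ(θ) = ∑_{n≥1} n^{-2θ}; in particular P_D(θ) → ∞ as θ ↘ 1/2. -/
open Filter

/-- The continued fraction denominator `q_k([a_1, ..., a_k])` (the continuant). -/
def cfDen : List ℕ → ℕ
  | [] => 1
  | [a] => a
  | a :: b :: t => a * cfDen (b :: t) + cfDen t

/-- The Diophantine pressure (with `limsup`). -/
noncomputable def diophantinePressure (θ : ℝ) : ℝ :=
  limsup (fun k : ℕ =>
    Real.log (∑' l : {l : List ℕ // l.length = k ∧ ∀ a ∈ l, 1 ≤ a},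
      (cfDen l.1 : ℝ) ^ (-2 * θ)) / k) atTop

lemma cfDen_tail_le (b : ℕ) (t : List ℕ) (hb : 1 ≤ b) : cfDen t ≤ cfDen (b :: t) := by
  match t with
  | [] => simpa [cfDen] using hb
  | c :: t' =>
    show cfDen (c :: t') ≤ b * cfDen (c :: t') + cfDen t'
    calc cfDen (c :: t') = 1 * cfDen (c :: t') := (one_mul _).symm
      _ ≤ b * cfDen (c :: t') := Nat.mul_le_mul_right _ hb
      _ ≤ _ := Nat.le_add_right _ _

lemma cfDen_lower : ∀ l : List ℕ, (∀ a ∈ l, 1 ≤ a) → l.prod ≤ cfDen l := by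
  intro l
  induction l using cfDen.induct with
  | case1 => simp [cfDen]
  | case2 a => simp [cfDen]
  | case3 a b t ih1 ih2 =>
    intro h
    have hb : (b :: t).prod ≤ cfDen (b :: t) := ih1 (fun x hx => h x (List.mem_cons_of_mem _ hx))
    calc (a :: b :: t).prod = a * (b :: t).prod := List.prod_cons
      _ ≤ a * cfDen (b :: t) := Nat.mul_le_mul_left _ hb
      _ ≤ a * cfDen (b :: t) + cfDen t := Nat.le_add_right _ _
      _ = cfDen (a :: b :: t) := rfl

lemma cfDen_upper : ∀ l : List ℕ, (∀ a ∈ l, 1 ≤ a) → cfDen l ≤ 2 ^ l.length * l.prod := by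
  intro l
  induction l using cfDen.induct with
  | case1 => simp [cfDen]
  | case2 a => simp [cfDen]; omega
  | case3 a b t ih1 ih2 =>
    intro h
    have hb : 1 ≤ b := h b (by simp)
    have ha : 1 ≤ a := h a (by simp)
    have h1 : cfDen (b :: t) ≤ 2 ^ (b :: t).length * (b :: t).prod :=
      ih1 (fun x hx => h x (List.mem_cons_of_mem _ hx))
    have h2 : cfDen t ≤ cfDen (b :: t) := cfDen_tail_le b t hb
    calc cfDen (a :: b :: t) = a * cfDen (b :: t) + cfDen t := rfl
      _ ≤ a * cfDen (b :: t) + cfDen (b :: t) := by omega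
      _ = (a + 1) * cfDen (b :: t) := by ring
      _ ≤ (2 * a) * cfDen (b :: t) := Nat.mul_le_mul_right _ (by omega)
      _ ≤ (2 * a) * (2 ^ (b :: t).length * (b :: t).prod) := Nat.mul_le_mul_left _ h1
      _ = 2 ^ (a :: b :: t).length * (a :: b :: t).prod := by
          simp [List.length_cons, List.prod_cons, pow_succ]; ring

def listEquiv (k : ℕ) : (Fin k → ℕ) ≃ {l : List ℕ // l.length = k ∧ ∀ a ∈ l, 1 ≤ a} where
  toFun f := ⟨List.ofFn (fun i => f i + 1), by simp, by
    simp only [List.forall_mem_ofFn_iff]; intro j; omega⟩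
  invFun l := fun i => l.1.get (Fin.cast l.2.1.symm i) - 1
  left_inv f := by funext i; simp [List.get_ofFn]
  right_inv l := by
    apply Subtype.ext
    apply List.ext_get (by simp [l.2.1])
    intro n h1 h2
    obtain ⟨l, hlen, hpos⟩ := l
    simp only [List.get_ofFn, List.get_eq_getElem, Fin.cast_mk, Fin.coe_cast]
    have h3 := hpos (l[n]'h2) (List.getElem_mem h2)
    rw [List.getElem_ofFn]
    exact Nat.sub_add_cancel h3

noncomputable def zg (θ : ℝ) (n : ℕ) : ℝ := ((n : ℝ) + 1) ^ (-2 * θ)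

lemma zg_nonneg (θ : ℝ) (n : ℕ) : 0 ≤ zg θ n := Real.rpow_nonneg (by positivity) _

lemma summable_zg {θ : ℝ} (hθ : 1 / 2 < θ) : Summable (zg θ) := by
  have h : Summable (fun n : ℕ => (n : ℝ) ^ (-2 * θ)) :=
    Real.summable_nat_rpow.mpr (by linarith)
  have := (summable_nat_add_iff 1).mpr h
  refine this.congr fun n => ?_
  simp [zg]

lemma one_le_zsum {θ : ℝ} (hθ : 1 / 2 < θ) : 1 ≤ ∑' n, zg θ n := by
  have h0 : zg θ 0 = 1 := by simp [zg]
  calc (1 : ℝ) = zg θ 0 := h0.symm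
    _ ≤ ∑' n, zg θ n := Summable.le_tsum (summable_zg hθ) 0 (fun j _ => zg_nonneg θ j)

lemma pi_sum {θ : ℝ} (hθ : 1 / 2 < θ) (k : ℕ) :
    Summable (fun f : Fin k → ℕ => ∏ i, zg θ (f i)) ∧
    ∑' f : Fin k → ℕ, ∏ i, zg θ (f i) = (∑' n, zg θ n) ^ k := by
  induction k with
  | zero =>
    constructor
    · exact .of_finite
    · rw [tsum_eq_single (fun i => 0) (fun b hb => absurd (Subsingleton.elim b _) hb)]
      simp
  | succ k ih =>
    have e := Fin.consEquiv (fun _ : Fin (k + 1) => ℕ)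
    have hcomp : ∀ p : ℕ × (Fin k → ℕ),
        (∏ i, zg θ ((Fin.consEquiv (fun _ : Fin (k+1) => ℕ)) p i))
          = zg θ p.1 * ∏ i, zg θ (p.2 i) := by
      intro p
      rw [Fin.prod_univ_succ]
      simp [Fin.consEquiv]
    have hprodsum : Summable (fun p : ℕ × (Fin k → ℕ) => zg θ p.1 * ∏ i, zg θ (p.2 i)) := by
      apply Summable.mul_of_nonneg (summable_zg hθ) ih.1
      · intro n; exact zg_nonneg θ n
      · intro f; exact Finset.prod_nonneg fun i _ => zg_nonneg θ _
    have hsum : Summable (fun f : Fin (k+1) → ℕ => ∏ i, zg θ (f i)) := by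
      rw [← (Fin.consEquiv (fun _ : Fin (k+1) => ℕ)).summable_iff]
      exact hprodsum.congr fun p => (hcomp p).symm
    refine ⟨hsum, ?_⟩
    have h1 : ∑' f : Fin (k+1) → ℕ, ∏ i, zg θ (f i)
        = ∑' p : ℕ × (Fin k → ℕ), zg θ p.1 * ∏ i, zg θ (p.2 i) := by
      rw [← (Fin.consEquiv (fun _ : Fin (k+1) => ℕ)).tsum_eq
        (fun f : Fin (k+1) → ℕ => ∏ i, zg θ (f i))]
      exact tsum_congr hcomp
    rw [h1, ← Summable.tsum_mul_tsum (summable_zg hθ) ih.1 hprodsum, ih.2, pow_succ]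
    ring


lemma S_est {θ : ℝ} (hθ : 1 / 2 < θ) (k : ℕ) :
    ((2:ℝ) ^ k) ^ (-2*θ) * (∑' n, zg θ n) ^ k ≤
      (∑' l : {l : List ℕ // l.length = k ∧ ∀ a ∈ l, 1 ≤ a}, (cfDen l.1 : ℝ) ^ (-2*θ)) ∧
    (∑' l : {l : List ℕ // l.length = k ∧ ∀ a ∈ l, 1 ≤ a}, (cfDen l.1 : ℝ) ^ (-2*θ)) ≤
      (∑' n, zg θ n) ^ k := by
  have hexp : -2 * θ ≤ 0 := by linarith
  set P : (Fin k → ℕ) → ℝ := fun f => ∏ i, zg θ (f i) with hP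
  set F : (Fin k → ℕ) → ℝ := fun f => (cfDen (List.ofFn fun i => f i + 1) : ℝ) ^ (-2*θ) with hF
  have key : ∀ f : Fin k → ℕ,
      ((2:ℝ) ^ k) ^ (-2*θ) * P f ≤ F f ∧ F f ≤ P f := by
    intro f
    have hpos : ∀ a ∈ (List.ofFn fun i => f i + 1), 1 ≤ a := by
      simp only [List.forall_mem_ofFn_iff]; intro j; omega
    have hprodpos : 0 < (List.ofFn fun i => f i + 1).prod := by
      rw [List.prod_ofFn]
      exact Finset.prod_pos fun i _ => Nat.succ_pos _
    have hcast : (((List.ofFn fun i => f i + 1).prod : ℕ) : ℝ) ^ (-2*θ) = P f := by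
      rw [List.prod_ofFn, hP]
      push_cast
      rw [← Real.finset_prod_rpow _ _ (fun i _ => by positivity)]
      rfl
    have hlow : ((List.ofFn fun i => f i + 1).prod : ℕ) ≤ cfDen (List.ofFn fun i => f i + 1) :=
      cfDen_lower _ hpos
    have hup : cfDen (List.ofFn fun i => f i + 1)
        ≤ 2 ^ (List.ofFn fun i => f i + 1).length * (List.ofFn fun i => f i + 1).prod :=
      cfDen_upper _ hpos
    have hlen : (List.ofFn fun i => f i + 1).length = k := by simp
    have hcfpos : (0:ℝ) < (cfDen (List.ofFn fun i => f i + 1) : ℝ) := by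
      exact_mod_cast lt_of_lt_of_le hprodpos hlow
    constructor
    · have h1 : (cfDen (List.ofFn fun i => f i + 1) : ℝ)
          ≤ ((2:ℝ) ^ k) * (((List.ofFn fun i => f i + 1).prod : ℕ) : ℝ) := by
        rw [hlen] at hup; exact_mod_cast hup
      have h2 := Real.rpow_le_rpow_of_nonpos hcfpos h1 hexp
      have h3 : (((2:ℝ) ^ k) * (((List.ofFn fun i => f i + 1).prod : ℕ) : ℝ)) ^ (-2*θ)
          = ((2:ℝ) ^ k) ^ (-2*θ) * (((List.ofFn fun i => f i + 1).prod : ℕ) : ℝ) ^ (-2*θ) :=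
        Real.mul_rpow (by positivity) (by positivity)
      rw [h3, hcast] at h2
      exact h2
    · have h1 : (((List.ofFn fun i => f i + 1).prod : ℕ) : ℝ)
          ≤ (cfDen (List.ofFn fun i => f i + 1) : ℝ) := by exact_mod_cast hlow
      have h2 := Real.rpow_le_rpow_of_nonpos (by exact_mod_cast hprodpos) h1 hexp
      rw [hcast] at h2
      exact h2
  have hPsum := (pi_sum hθ k).1
  have hPval := (pi_sum hθ k).2
  have hFnonneg : ∀ f, 0 ≤ F f := fun f => Real.rpow_nonneg (Nat.cast_nonneg _) _
  have hFsum : Summable F := Summable.of_nonneg_of_le hFnonneg (fun f => (key f).2) hPsum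
  have heq : (∑' l : {l : List ℕ // l.length = k ∧ ∀ a ∈ l, 1 ≤ a}, (cfDen l.1 : ℝ) ^ (-2*θ))
      = ∑' f : Fin k → ℕ, F f := by
    rw [← (listEquiv k).tsum_eq (fun l : {l : List ℕ // l.length = k ∧ ∀ a ∈ l, 1 ≤ a} =>
      (cfDen l.1 : ℝ) ^ (-2*θ))]
    exact tsum_congr fun f => rfl
  constructor
  · rw [heq, ← hPval, ← tsum_mul_left]
    exact Summable.tsum_le_tsum (fun f => (key f).1) (hPsum.mul_left _) hFsum
  · rw [heq, ← hPval]
    exact Summable.tsum_le_tsum (fun f => (key f).2) hFsum hPsum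

open Filter in
lemma pressure_est {θ : ℝ} (hθ : 1 / 2 < θ) :
    Real.log (∑' n : ℕ, zg θ n) - 2 * θ * Real.log 2 ≤ diophantinePressure θ ∧
    diophantinePressure θ ≤ Real.log (∑' n : ℕ, zg θ n) := by
  have hζ1 : 1 ≤ ∑' n, zg θ n := one_le_zsum hθ
  have hζ0 : (0:ℝ) < ∑' n, zg θ n := lt_of_lt_of_le one_pos hζ1
  set L := Real.log (∑' n, zg θ n) with hL
  set u : ℕ → ℝ := fun k =>
    Real.log (∑' l : {l : List ℕ // l.length = k ∧ ∀ a ∈ l, 1 ≤ a},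
      (cfDen l.1 : ℝ) ^ (-2 * θ)) / k with hu
  have hdp : diophantinePressure θ = limsup u atTop := rfl
  have hbd : ∀ k : ℕ, 1 ≤ k → (L - 2 * θ * Real.log 2 ≤ u k ∧ u k ≤ L) := by
    intro k hk
    have hest := S_est hθ k
    set S := ∑' l : {l : List ℕ // l.length = k ∧ ∀ a ∈ l, 1 ≤ a},
      (cfDen l.1 : ℝ) ^ (-2 * θ) with hS
    have hc : (0:ℝ) < ((2:ℝ) ^ k) ^ (-2*θ) := Real.rpow_pos_of_pos (by positivity) _
    have hzk : (0:ℝ) < (∑' n, zg θ n) ^ k := pow_pos hζ0 k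
    have hSpos : 0 < S := lt_of_lt_of_le (mul_pos hc hzk) hest.1
    have hkpos : (0:ℝ) < (k : ℝ) := by exact_mod_cast hk
    have hupS : Real.log S ≤ (k : ℝ) * L :=
      (Real.log_le_log hSpos hest.2).trans_eq (Real.log_pow _ _)
    have hlowS : (k : ℝ) * L - 2 * θ * ((k : ℝ) * Real.log 2) ≤ Real.log S := by
      have h1 := Real.log_le_log (mul_pos hc hzk) hest.1
      have h2 : Real.log (((2:ℝ) ^ k) ^ (-2*θ) * (∑' n, zg θ n) ^ k)
          = -2 * θ * ((k : ℝ) * Real.log 2) + (k : ℝ) * L := by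
        rw [Real.log_mul (ne_of_gt hc) (ne_of_gt hzk), Real.log_rpow (by positivity),
          Real.log_pow, Real.log_pow]
      rw [h2] at h1
      linarith
    have huk : u k = Real.log S / k := rfl
    constructor
    · rw [huk, le_div_iff₀ hkpos]
      calc (L - 2 * θ * Real.log 2) * (k : ℝ)
          = (k : ℝ) * L - 2 * θ * ((k : ℝ) * Real.log 2) := by ring
        _ ≤ Real.log S := hlowS
    · rw [huk, div_le_iff₀ hkpos]
      calc Real.log S ≤ (k : ℝ) * L := hupS
        _ = L * (k : ℝ) := mul_comm _ _
  rw [hdp]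
  constructor
  · refine le_limsup_of_frequently_le
      ((eventually_atTop.2 ⟨1, fun k hk => (hbd k hk).1⟩).frequently) ?_
    exact isBoundedUnder_of_eventually_le (eventually_atTop.2 ⟨1, fun k hk => (hbd k hk).2⟩)
  · refine limsup_le_of_le ?_ (eventually_atTop.2 ⟨1, fun k hk => (hbd k hk).2⟩)
    exact isCoboundedUnder_le_of_eventually_le atTop
      (eventually_atTop.2 ⟨1, fun k hk => (hbd k hk).1⟩)

open Filter in
lemma zeta_tendsto :
    Tendsto (fun t : ℝ => ∑' n, zg t n) (nhdsWithin (1/2) (Set.Ioi (1/2))) atTop := by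
  rw [tendsto_atTop]
  intro M
  obtain ⟨N, hN⟩ :=
    (tendsto_atTop.1 Real.tendsto_sum_range_one_div_nat_succ_atTop (M + 1)).exists
  have hcont : ContinuousAt (fun t : ℝ => ∑ n ∈ Finset.range N, ((n:ℝ)+1) ^ (-2*t)) (1/2) := by
    apply Continuous.continuousAt
    apply continuous_finset_sum
    intro i _
    exact Continuous.rpow continuous_const (by continuity) (fun x => Or.inl (by positivity))
  have hval : (∑ n ∈ Finset.range N, ((n:ℝ)+1) ^ (-2*(1/2 : ℝ)))
      = ∑ i ∈ Finset.range N, 1/((i:ℝ)+1) := by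
    refine Finset.sum_congr rfl fun n _ => ?_
    norm_num [Real.rpow_neg_one]
  have hMlt : M < ∑ n ∈ Finset.range N, ((n:ℝ)+1) ^ (-2*(1/2 : ℝ)) := by
    rw [hval]; linarith
  have hev := hcont.eventually (eventually_gt_nhds hMlt)
  filter_upwards [nhdsWithin_le_nhds hev, self_mem_nhdsWithin] with t ht hmem
  refine le_trans ht.le ?_
  exact Summable.sum_le_tsum (Finset.range N) (fun n _ => zg_nonneg t n) (summable_zg hmem)

/-- For `θ > 1/2`, `0 ≤ log ζ(θ) - P_D(θ) ≤ 2θ log 2`, where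
`ζ(θ) = ∑_{n ≥ 1} n^{-2θ}`; in particular `P_D(θ) → ∞` as `θ ↘ 1/2`. -/
theorem diophantine_pressure_zeta_bounds :
    (∀ θ : ℝ, 1 / 2 < θ →
      0 ≤ Real.log (∑' n : ℕ, ((n : ℝ) + 1) ^ (-2 * θ)) - diophantinePressure θ ∧
      Real.log (∑' n : ℕ, ((n : ℝ) + 1) ^ (-2 * θ)) - diophantinePressure θ ≤
        2 * θ * Real.log 2) ∧
    Tendsto diophantinePressure (nhdsWithin (1 / 2) (Set.Ioi (1 / 2))) atTop := by
  have hzg : ∀ θ : ℝ, (∑' n : ℕ, ((n : ℝ) + 1) ^ (-2 * θ)) = ∑' n, zg θ n :=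
    fun θ => tsum_congr fun n => rfl
  constructor
  · intro θ hθ
    obtain ⟨h1, h2⟩ := pressure_est hθ
    rw [hzg θ]
    exact ⟨by linarith, by linarith⟩
  · have hlog : Tendsto (fun t : ℝ => Real.log (∑' n, zg t n))
        (nhdsWithin (1/2) (Set.Ioi (1/2))) atTop :=
      Real.tendsto_log_atTop.comp zeta_tendsto
    have hconst : Tendsto (fun t : ℝ => -(2 * t * Real.log 2))
        (nhdsWithin (1/2) (Set.Ioi (1/2))) (nhds (-(2 * (1/2 : ℝ) * Real.log 2))) := by
      apply Tendsto.mono_left _ nhdsWithin_le_nhds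
      exact (Continuous.tendsto (by continuity) _)
    have hmain : Tendsto (fun t : ℝ => Real.log (∑' n, zg t n) - 2 * t * Real.log 2)
        (nhdsWithin (1/2) (Set.Ioi (1/2))) atTop := by
      simpa [sub_eq_add_neg] using hlog.atTop_add hconst
    refine tendsto_atTop_mono' _ ?_ hmain
    filter_upwards [self_mem_nhdsWithin] with t ht
    exact (pressure_est ht).1
end
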